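/- For a two-row partition (λ_1, λ_2) with λ_1 ≥ λ_2 ≥ 1, F_{(λ_1,λ_2)}(p,q) = -q^{λ_1-1} p^{λ_2+1} + q^{λ_1-1} (p+q)^{λ_2+1}. -/

import Mathlib

open Finset


def wexB {n : ℕ} (π : Equiv.Perm (Fin n)) : Finset (Fin n) :=
  Finset.univ.filter (fun i => i ≤ π i)

def wex {n : ℕ} (π : Equiv.Perm (Fin n)) : ℕ := (wexB π).card

def wexbotsum {n : ℕ} (π : Equiv.Perm (Fin n)) : ℕ := ∑ i ∈ wexB π, (i.val + 1)

def wextopsum {n : ℕ} (π : Equiv.Perm (Fin n)) : ℕ := ∑ i ∈ wexB π, ((π i).val + 1)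

def wexbotsSet {n : ℕ} (π : Equiv.Perm (Fin n)) : Finset ℕ :=
  (wexB π).image (fun i => i.val + 1)

def wextopsSet {n : ℕ} (π : Equiv.Perm (Fin n)) : Finset ℕ :=
  (wexB π).image (fun i => (π i).val + 1)

/-- `A_EE`: pairs `(i,j)` with `j < i ≤ π i < π j`. -/
def AEE {n : ℕ} (π : Equiv.Perm (Fin n)) : ℕ :=
  (Finset.univ.filter (fun p : Fin n × Fin n =>
    p.2 < p.1 ∧ p.1 ≤ π p.1 ∧ π p.1 < π p.2)).card

/-- `A_NN`: pairs `(i,j)` with `π j < π i < i < j`. -/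
def ANN {n : ℕ} (π : Equiv.Perm (Fin n)) : ℕ :=
  (Finset.univ.filter (fun p : Fin n × Fin n =>
    π p.2 < π p.1 ∧ π p.1 < p.1 ∧ p.1 < p.2)).card

/-- `A_EN`: pairs `(i,j)` with `j ≤ π j < π i < i`. -/
def AEN {n : ℕ} (π : Equiv.Perm (Fin n)) : ℕ :=
  (Finset.univ.filter (fun p : Fin n × Fin n =>
    p.2 ≤ π p.2 ∧ π p.2 < π p.1 ∧ π p.1 < p.1)).card

/-- `A_NE`: pairs `(i,j)` with `π i < i < j ≤ π j`. -/
def ANE {n : ℕ} (π : Equiv.Perm (Fin n)) : ℕ :=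
  (Finset.univ.filter (fun p : Fin n × Fin n =>
    π p.1 < p.1 ∧ p.1 < p.2 ∧ p.2 ≤ π p.2)).card

/-- `C_EE`: pairs `(i,j)` with `j < i ≤ π j < π i`. -/
def CEE {n : ℕ} (π : Equiv.Perm (Fin n)) : ℕ :=
  (Finset.univ.filter (fun p : Fin n × Fin n =>
    p.2 < p.1 ∧ p.1 ≤ π p.2 ∧ π p.2 < π p.1)).card

/-- `C_NN`: pairs `(i,j)` with `π i < π j < i < j`. -/
def CNN {n : ℕ} (π : Equiv.Perm (Fin n)) : ℕ :=
  (Finset.univ.filter (fun p : Fin n × Fin n =>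
    π p.1 < π p.2 ∧ π p.2 < p.1 ∧ p.1 < p.2)).card

def descents {n : ℕ} (π : Equiv.Perm (Fin n)) : Finset (Fin n) :=
  Finset.univ.filter (fun i => ∃ h : i.val + 1 < n, π ⟨i.val + 1, h⟩ < π i)

def des {n : ℕ} (π : Equiv.Perm (Fin n)) : ℕ := (descents π).card

def destopsum {n : ℕ} (π : Equiv.Perm (Fin n)) : ℕ :=
  ∑ i ∈ descents π, ((π i).val + 1)

def desbotsum {n : ℕ} (π : Equiv.Perm (Fin n)) : ℕ :=
  ∑ i ∈ descents π, (if h : i.val + 1 < n then (π ⟨i.val + 1, h⟩).val + 1 else 0)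

def destopsSet {n : ℕ} (π : Equiv.Perm (Fin n)) : Finset ℕ :=
  (descents π).image (fun i => (π i).val + 1)

def desbotsSet {n : ℕ} (π : Equiv.Perm (Fin n)) : Finset ℕ :=
  (descents π).image
    (fun i => if h : i.val + 1 < n then (π ⟨i.val + 1, h⟩).val + 1 else 0)

def maj {n : ℕ} (π : Equiv.Perm (Fin n)) : ℕ := ∑ i ∈ descents π, (i.val + 1)

/-- Occurrences of the generalized pattern `(2-31)`. -/
def P2d31 {n : ℕ} (π : Equiv.Perm (Fin n)) : ℕ :=
  (Finset.univ.filter (fun p : Fin n × Fin n =>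
    p.1 < p.2 ∧ ∃ h : p.2.val + 1 < n,
      π ⟨p.2.val + 1, h⟩ < π p.1 ∧ π p.1 < π p.2)).card

/-- Occurrences of the generalized pattern `(31-2)`. -/
def P31d2 {n : ℕ} (π : Equiv.Perm (Fin n)) : ℕ :=
  (Finset.univ.filter (fun p : Fin n × Fin n =>
    ∃ h : p.1.val + 1 < n, π ⟨p.1.val + 1, h⟩ < π p.1 ∧ p.1.val + 1 < p.2.val ∧
      π ⟨p.1.val + 1, h⟩ < π p.2 ∧ π p.2 < π p.1)).card

/-- Occurrences of the generalized pattern `(21-3)`. -/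
def P21d3 {n : ℕ} (π : Equiv.Perm (Fin n)) : ℕ :=
  (Finset.univ.filter (fun p : Fin n × Fin n =>
    ∃ h : p.1.val + 1 < n, π ⟨p.1.val + 1, h⟩ < π p.1 ∧ p.1.val + 1 < p.2.val ∧
      π p.1 < π p.2)).card

/-- Occurrences of the generalized pattern `(3-21)`. -/
def P3d21 {n : ℕ} (π : Equiv.Perm (Fin n)) : ℕ :=
  (Finset.univ.filter (fun p : Fin n × Fin n =>
    p.1 < p.2 ∧ ∃ h : p.2.val + 1 < n,
      π ⟨p.2.val + 1, h⟩ < π p.2 ∧ π p.2 < π p.1)).card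

/-- Occurrences of the generalized pattern `(1-32)`. -/
def P1d32 {n : ℕ} (π : Equiv.Perm (Fin n)) : ℕ :=
  (Finset.univ.filter (fun p : Fin n × Fin n =>
    p.1 < p.2 ∧ ∃ h : p.2.val + 1 < n,
      π ⟨p.2.val + 1, h⟩ < π p.2 ∧ π p.1 < π ⟨p.2.val + 1, h⟩)).card

/-- Occurrences of the generalized pattern `(32-1)`. -/
def P32d1 {n : ℕ} (π : Equiv.Perm (Fin n)) : ℕ :=
  (Finset.univ.filter (fun p : Fin n × Fin n =>
    ∃ h : p.1.val + 1 < n, π ⟨p.1.val + 1, h⟩ < π p.1 ∧ p.1.val + 1 < p.2.val ∧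
      π p.2 < π ⟨p.1.val + 1, h⟩)).card


/-- A permutation tableau with `n-k` columns, encoded as a `{0,1,2}`-filling of the full
`k × m` rectangle: the `2`'s are the boxes outside the Young diagram (southeast corner). -/
def IsPermTableau {k m : ℕ} (T : Fin k → Fin m → Fin 3) : Prop :=
  (∀ j : Fin m, ∃ i : Fin k, T i j = 1) ∧
  (∀ (i : Fin k) (j : Fin m), T i j ≠ 2 →
    ∀ (i' : Fin k) (j' : Fin m), i' ≤ i → j' ≤ j → T i' j' ≠ 2) ∧
  (∀ (i : Fin k) (j : Fin m), T i j = 0 →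
    ¬ ((∃ i' < i, T i' j = 1) ∧ (∃ j' < j, T i j' = 1)))

def rowLen {k m : ℕ} (T : Fin k → Fin m → Fin 3) (i : Fin k) : ℕ :=
  (Finset.univ.filter (fun j => T i j ≠ 2)).card

def zerosT {k m : ℕ} (T : Fin k → Fin m → Fin 3) : ℕ :=
  ∑ i, (Finset.univ.filter (fun j => T i j = 0)).card

def onesT {k m : ℕ} (T : Fin k → Fin m → Fin 3) : ℕ :=
  ∑ i, (Finset.univ.filter (fun j => T i j = 1)).card

def twosT {k m : ℕ} (T : Fin k → Fin m → Fin 3) : ℕ :=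
  ∑ i, (Finset.univ.filter (fun j => T i j = 2)).card

/-- A valid `0/1`-filling of the Young diagram with row lengths `lam`. -/
def ValidFilling {k : ℕ} (lam : Fin k → ℕ) (F : ∀ i : Fin k, Fin (lam i) → Bool) : Prop :=
  (∀ (i : Fin k) (j : Fin (lam i)), ∃ (i' : Fin k) (h : (j : ℕ) < lam i'), F i' ⟨j, h⟩ = true) ∧
  (∀ (i : Fin k) (j : Fin (lam i)), F i j = false →
    ¬ ((∃ (i' : Fin k) (h : (j : ℕ) < lam i'), i' < i ∧ F i' ⟨j, h⟩ = true) ∧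
       (∃ j' : Fin (lam i), j' < j ∧ F i j' = true)))

def fillZeros {k : ℕ} {lam : Fin k → ℕ} (F : ∀ i : Fin k, Fin (lam i) → Bool) : ℕ :=
  ∑ i, (Finset.univ.filter (fun j => F i j = false)).card

def fillOnes {k : ℕ} {lam : Fin k → ℕ} (F : ∀ i : Fin k, Fin (lam i) → Bool) : ℕ :=
  ∑ i, (Finset.univ.filter (fun j => F i j = true)).card

open Classical in
/-- `F_λ(p,q)`, evaluated at integers `p`, `q`: the sum over valid fillings of
`p ^ (#0's) * q ^ (#1's)`. -/
noncomputable def Fval {k : ℕ} (lam : Fin k → ℕ) (p q : ℤ) : ℤ :=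
  ∑ F ∈ Finset.univ.filter
      (fun F : ∀ i : Fin k, Fin (lam i) → Bool => ValidFilling lam F),
    p ^ fillZeros F * q ^ fillOnes F

section Helpers

lemma card_filter_fin (n : ℕ) (P : ℕ → Prop) [DecidablePred P] :
    ((univ : Finset (Fin n)).filter fun j => P j.val).card = ((range n).filter P).card := by
  rw [Finset.card_filter, Finset.card_filter,
    Fin.sum_univ_eq_sum_range (fun i => if P i then 1 else 0)]

def toF {l1 l2 : ℕ} (f0 : Fin l1 → Bool) (f1 : Fin l2 → Bool) :
    ∀ i : Fin 2, Fin (![l1, l2] i) → Bool :=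
  fun i => match i with
  | ⟨0, _⟩ => f0
  | ⟨1, _⟩ => f1

def fEquiv (l1 l2 : ℕ) :
    ((Fin l1 → Bool) × (Fin l2 → Bool)) ≃ (∀ i : Fin 2, Fin (![l1, l2] i) → Bool) where
  toFun x := toF x.1 x.2
  invFun F := (F 0, F 1)
  left_inv x := rfl
  right_inv F := by
    funext i
    match i with
    | ⟨0, _⟩ => rfl
    | ⟨1, _⟩ => rfl

lemma fillZeros_toF {l1 l2 : ℕ} (f0 : Fin l1 → Bool) (f1 : Fin l2 → Bool) :
    fillZeros (toF f0 f1) =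
      (univ.filter fun j => f0 j = false).card + (univ.filter fun j => f1 j = false).card := by
  rw [fillZeros, Fin.sum_univ_two]; rfl

lemma fillOnes_toF {l1 l2 : ℕ} (f0 : Fin l1 → Bool) (f1 : Fin l2 → Bool) :
    fillOnes (toF f0 f1) =
      (univ.filter fun j => f0 j = true).card + (univ.filter fun j => f1 j = true).card := by
  rw [fillOnes, Fin.sum_univ_two]; rfl

def Cond {l1 l2 : ℕ} (f0 : Fin l1 → Bool) (f1 : Fin l2 → Bool) : Prop :=
  (∀ j : Fin l1, (∀ h : (j : ℕ) < l2, f1 ⟨j, h⟩ = false) → f0 j = true) ∧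
  (∀ j j' : Fin l2, j' < j → f1 j' = true → f1 j = true)

lemma valid_iff {l1 l2 : ℕ} (h12 : l2 ≤ l1) (f0 : Fin l1 → Bool) (f1 : Fin l2 → Bool) :
    ValidFilling ![l1, l2] (toF f0 f1) ↔ Cond f0 f1 := by
  constructor
  · rintro ⟨h1, h2⟩
    constructor
    · intro j hall
      rcases h1 0 j with ⟨i', h, hval⟩
      match i' with
      | ⟨0, _⟩ => exact (Fin.eta j h) ▸ hval
      | ⟨1, _⟩ => exact absurd hval (by simp [toF, hall h])
    · intro j j' hlt htrue
      by_contra hfalse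
      simp only [Bool.not_eq_true] at hfalse
      have hcol := h1 1 j
      have hf0 : f0 ⟨(j : ℕ), lt_of_lt_of_le j.isLt h12⟩ = true := by
        rcases hcol with ⟨i', h, hval⟩
        match i' with
        | ⟨0, _⟩ => exact hval
        | ⟨1, _⟩ =>
          have hv : f1 ⟨(j:ℕ), h⟩ = true := hval
          rw [Fin.eta j h] at hv; rw [hv] at hfalse; exact absurd hfalse (by simp)
      exact h2 1 j hfalse ⟨⟨0, lt_of_lt_of_le j.isLt h12, by simp [Fin.lt_def], hf0⟩,
        ⟨j', hlt, htrue⟩⟩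
  · rintro ⟨c1, c2⟩
    constructor
    · intro i j
      match i with
      | ⟨0, hi⟩ =>
        by_cases hj : (j : ℕ) < l2
        · by_cases ht : f1 ⟨(j : ℕ), hj⟩ = true
          · exact ⟨1, hj, ht⟩
          · refine ⟨0, j.isLt, ?_⟩
            rw [Fin.eta]
            exact c1 j (fun h => by simpa using ht)
        · exact ⟨0, j.isLt, by rw [Fin.eta]; exact c1 j (fun h => absurd h hj)⟩
      | ⟨1, hi⟩ =>
        by_cases ht : f1 j = true
        · exact ⟨1, j.isLt, by rw [Fin.eta]; exact ht⟩
        · refine ⟨0, lt_of_lt_of_le j.isLt h12, c1 ⟨(j:ℕ), lt_of_lt_of_le j.isLt h12⟩ ?_⟩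
          intro h
          exact Bool.eq_false_iff.mpr ht
    · intro i j hf
      rintro ⟨⟨i', h, hlt, hval⟩, ⟨j', hj', hval'⟩⟩
      match i, i' with
      | ⟨0, _⟩, _ => exact absurd hlt (by simp [Fin.lt_def])
      | ⟨1, _⟩, ⟨1, _⟩ => exact absurd hlt (by simp [Fin.lt_def])
      | ⟨1, hi⟩, ⟨0, _⟩ =>
        have hf' : f1 j = false := hf
        have := c2 j j' hj' hval'
        rw [this] at hf'
        exact absurd hf' (by simp)

lemma boolsum (m : ℕ) (S : Finset (Fin m)) (p q : ℤ) :
    ∑ f : Fin m → Bool,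
      (if ∀ j ∈ S, f j = true then
        p ^ ((univ.filter fun j => f j = false).card) *
          q ^ ((univ.filter fun j => f j = true).card) else 0)
      = q ^ S.card * (p + q) ^ (m - S.card) := by
  classical
  have key : ∀ f : Fin m → Bool,
      (if ∀ j ∈ S, f j = true then
        p ^ ((univ.filter fun j => f j = false).card) *
          q ^ ((univ.filter fun j => f j = true).card) else 0)
      = ∏ j : Fin m, (if f j then q else if j ∈ S then 0 else p) := by
    intro f
    by_cases hf : ∀ j ∈ S, f j = true
    · rw [if_pos hf]
      have h1 : ∀ j : Fin m, (if f j then q else if j ∈ S then 0 else p)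
          = (if f j then q else p) := by
        intro j
        by_cases hj : f j
        · simp [hj]
        · have : j ∉ S := fun hjS => hj (hf j hjS)
          simp [hj, this]
      rw [Finset.prod_congr rfl (fun j _ => h1 j)]
      rw [Finset.prod_ite, Finset.prod_const, Finset.prod_const]
      rw [mul_comm]
      have e1 : (univ.filter fun j : Fin m => ¬ f j = true) = univ.filter fun j => f j = false := by
        ext j; simp
      rw [e1]
    · rw [if_neg hf]
      push_neg at hf
      obtain ⟨j, hjS, hj⟩ := hf
      refine (Finset.prod_eq_zero (Finset.mem_univ j) ?_).symm
      simp [hj, hjS]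
  rw [Finset.sum_congr rfl (fun f _ => key f)]
  rw [← Fintype.prod_sum (fun (j : Fin m) (b : Bool) => if b then q else if j ∈ S then 0 else p)]
  have h2 : ∀ j : Fin m, (∑ b : Bool, if b then q else if j ∈ S then 0 else p)
      = if j ∈ S then q else p + q := by
    intro j
    rw [Fintype.sum_bool]
    by_cases hj : j ∈ S <;> simp [hj, add_comm]
  rw [Finset.prod_congr rfl (fun j _ => h2 j)]
  rw [Finset.prod_ite, Finset.prod_const, Finset.prod_const]
  congr 2
  · simp [Finset.filter_mem_eq_inter]
  · have : univ.filter (fun j : Fin m => ¬ j ∈ S) = Sᶜ := by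
      ext j; simp
    rw [this, Finset.card_compl]
    simp

def thr (l2 a : ℕ) : Fin l2 → Bool := fun j => decide (a ≤ (j : ℕ))

def Mono {l2 : ℕ} (f1 : Fin l2 → Bool) : Prop :=
  ∀ j j' : Fin l2, j' < j → f1 j' = true → f1 j = true

lemma mono_filter_eq (l2 : ℕ) [DecidablePred (Mono (l2 := l2))] :
    (univ : Finset (Fin l2 → Bool)).filter Mono = (range (l2 + 1)).image (thr l2) := by
  classical
  ext f1
  simp only [mem_filter, mem_univ, true_and, mem_image, mem_range]
  constructor
  · intro hm
    set a := ((univ : Finset (Fin l2)).filter fun j => f1 j = false).card with ha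
    have hale : a ≤ l2 := le_trans (Finset.card_filter_le _ _) (by simp)
    refine ⟨a, by omega, ?_⟩
    funext j
    by_cases hj : f1 j = true
    · rw [hj, thr]
      have hsub : ((univ : Finset (Fin l2)).filter fun j' => f1 j' = false) ⊆
          (univ.filter fun j' : Fin l2 => (j' : ℕ) < (j : ℕ)) := by
        intro j' hj'
        simp only [mem_filter, mem_univ, true_and] at hj' ⊢
        by_contra hge
        push_neg at hge
        have : (j : ℕ) ≤ (j' : ℕ) := hge
        rcases lt_or_eq_of_le this with h | h
        · have := hm j' j (by exact h) hj
          rw [this] at hj'; simp at hj'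
        · have : j = j' := Fin.ext h
          rw [← this] at hj'; rw [hj] at hj'; simp at hj'
      have hcard : a ≤ (j : ℕ) := by
        have := Finset.card_le_card hsub
        rw [card_filter_fin l2 (fun x => x < (j : ℕ))] at this
        have he : (range l2).filter (fun x => x < (j : ℕ)) = range (j : ℕ) := by
          ext x; simp; omega
        rw [he, card_range] at this
        exact le_trans (le_of_eq ha) this
      simp [hcard]
    · simp only [Bool.not_eq_true] at hj
      rw [hj, thr]
      have hsub : ((univ : Finset (Fin l2)).filter fun j' : Fin l2 => (j' : ℕ) ≤ (j : ℕ)) ⊆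
          (univ.filter fun j' => f1 j' = false) := by
        intro j' hj'
        simp only [mem_filter, mem_univ, true_and] at hj' ⊢
        by_contra ht
        simp only [Bool.not_eq_false] at ht
        rcases lt_or_eq_of_le hj' with h | h
        · have := hm j j' (by exact h) ht
          rw [this] at hj; simp at hj
        · have : j' = j := Fin.ext h
          rw [this] at ht; rw [ht] at hj; simp at hj
      have hcard : (j : ℕ) + 1 ≤ a := by
        have := Finset.card_le_card hsub
        rw [card_filter_fin l2 (fun x => x ≤ (j : ℕ))] at this
        have he : (range l2).filter (fun x => x ≤ (j : ℕ)) = range ((j : ℕ) + 1) := by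
          ext x; simp; omega
        rw [he, card_range] at this
        omega
      have : ¬ (a ≤ (j : ℕ)) := by omega
      simp [this]
  · rintro ⟨a, _, rfl⟩
    intro j j' hlt ht
    simp only [thr, decide_eq_true_eq] at ht ⊢
    have : (j' : ℕ) < (j : ℕ) := hlt
    omega

lemma thr_inj_lt (l2 a b : ℕ) (hb : b ≤ l2) (h : a < b) : thr l2 a ≠ thr l2 b := by
  intro hab
  have hal : a < l2 := by omega
  have hc := congrFun hab ⟨a, hal⟩
  simp [thr] at hc
  omega

lemma thr_inj (l2 : ℕ) : Set.InjOn (thr l2) (range (l2 + 1)) := by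
  intro a ha b hb hab
  simp only [coe_range, Set.mem_Iio] at ha hb
  rcases lt_trichotomy a b with h | h | h
  · exact absurd hab (thr_inj_lt l2 a b (by omega) h)
  · exact h
  · exact absurd hab.symm (thr_inj_lt l2 b a (by omega) h)

lemma mono_thr (l2 a : ℕ) : Mono (thr l2 a) := by
  intro j j' hlt ht
  simp only [thr, decide_eq_true_eq] at ht ⊢
  have : (j' : ℕ) < (j : ℕ) := hlt
  omega

lemma card_falses (l2 a : ℕ) (ha : a ≤ l2) :
    ((univ : Finset (Fin l2)).filter fun j => thr l2 a j = false).card = a := by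
  have h1 : ∀ j : Fin l2, (thr l2 a j = false) ↔ ((j:ℕ) < a) := by
    intro j; simp only [thr, decide_eq_false_iff_not, not_le]
  rw [Finset.filter_congr (fun j _ => by rw [h1 j])]
  rw [card_filter_fin l2 (fun x => x < a)]
  have : (range l2).filter (fun x => x < a) = range a := by ext x; simp; omega
  rw [this, card_range]

lemma card_trues (l2 a : ℕ) :
    ((univ : Finset (Fin l2)).filter fun j => thr l2 a j = true).card = l2 - a := by
  have h1 : ∀ j : Fin l2, (thr l2 a j = true) ↔ (a ≤ (j:ℕ)) := by
    intro j; simp [thr]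
  rw [Finset.filter_congr (fun j _ => by rw [h1 j])]
  rw [card_filter_fin l2 (fun x => a ≤ x)]
  have : (range l2).filter (fun x => a ≤ x) = Ico a l2 := by ext x; simp; omega
  rw [this, Nat.card_Ico]

lemma card_forced (l1 l2 a : ℕ) (ha : a ≤ l2) (h12 : l2 ≤ l1) :
    ((univ : Finset (Fin l1)).filter fun j : Fin l1 => (j:ℕ) < l2 → (j:ℕ) < a).card
      = a + (l1 - l2) := by
  rw [card_filter_fin l1 (fun x => x < l2 → x < a)]
  have : (range l1).filter (fun x => x < l2 → x < a) = range a ∪ Ico l2 l1 := by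
    ext x; simp; omega
  rw [this, Finset.card_union_of_disjoint, card_range, Nat.card_Ico]
  rw [Finset.disjoint_left]
  intro x hx hx'
  simp at hx hx'
  omega

end Helpers

theorem Fval_two_rows (l1 l2 : ℕ) (h2 : 1 ≤ l2) (h12 : l2 ≤ l1) (p q : ℤ) :
    Fval ![l1, l2] p q =
      -(q ^ (l1 - 1) * p ^ (l2 + 1)) + q ^ (l1 - 1) * (p + q) ^ (l2 + 1) := by
  classical
  set S : (Fin l2 → Bool) → Finset (Fin l1) :=
    fun f1 => univ.filter (fun j : Fin l1 => ∀ h : (j : ℕ) < l2, f1 ⟨(j : ℕ), h⟩ = false) with hS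
  have step1 : ∀ f1 : Fin l2 → Bool, (∑ f0 : Fin l1 → Bool,
      if ValidFilling ![l1, l2] (toF f0 f1) then
        p ^ fillZeros (toF f0 f1) * q ^ fillOnes (toF f0 f1) else 0)
      = if Mono f1 then
          (p ^ ((univ.filter fun j => f1 j = false).card) *
            q ^ ((univ.filter fun j => f1 j = true).card)) *
          (q ^ (S f1).card * (p + q) ^ (l1 - (S f1).card)) else 0 := by
    intro f1
    by_cases hM : Mono f1
    · rw [if_pos hM, ← boolsum l1 (S f1) p q, Finset.mul_sum]
      apply Finset.sum_congr rfl
      intro f0 _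
      have hCond : ValidFilling ![l1, l2] (toF f0 f1) ↔ (∀ j ∈ S f1, f0 j = true) := by
        rw [valid_iff h12]
        constructor
        · intro hc j hj
          rw [hS] at hj
          simp only [mem_filter, mem_univ, true_and] at hj
          exact hc.1 j hj
        · intro hc
          refine ⟨fun j hall => hc j ?_, hM⟩
          rw [hS]
          simp only [mem_filter, mem_univ, true_and]
          exact hall
      by_cases hc : ∀ j ∈ S f1, f0 j = true
      · rw [if_pos (hCond.mpr hc), if_pos hc, fillZeros_toF, fillOnes_toF, pow_add, pow_add]
        ring
      · rw [if_neg (fun hv => hc (hCond.mp hv)), if_neg hc, mul_zero]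
    · rw [if_neg hM]
      apply Finset.sum_eq_zero
      intro f0 _
      rw [if_neg]
      rw [valid_iff h12]
      exact fun hcond => hM hcond.2
  have main : Fval ![l1, l2] p q = ∑ f1 : Fin l2 → Bool,
      (if Mono f1 then
          (p ^ ((univ.filter fun j => f1 j = false).card) *
            q ^ ((univ.filter fun j => f1 j = true).card)) *
          (q ^ (S f1).card * (p + q) ^ (l1 - (S f1).card)) else 0) := by
    rw [Fval, Finset.sum_filter,
      ← Equiv.sum_comp (fEquiv l1 l2)
        (fun F => if ValidFilling ![l1, l2] F then p ^ fillZeros F * q ^ fillOnes F else 0),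
      Fintype.sum_prod_type, Finset.sum_comm]
    exact Finset.sum_congr rfl (fun f1 _ => step1 f1)
  rw [main, ← Finset.sum_filter, mono_filter_eq, Finset.sum_image
    (fun x hx y hy h => thr_inj l2 (Finset.mem_coe.mpr hx) (Finset.mem_coe.mpr hy) h)]
  clear main step1
  have cardS : ∀ a ∈ range (l2 + 1), (S (thr l2 a)).card = a + (l1 - l2) := by
    intro a ha
    simp only [mem_range] at ha
    have : S (thr l2 a) = univ.filter (fun j : Fin l1 => (j:ℕ) < l2 → (j:ℕ) < a) := by
      rw [hS]
      apply Finset.filter_congr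
      intro j _
      simp only [thr, decide_eq_false_iff_not, not_le]
    rw [this, card_forced l1 l2 a (by omega) h12]
  have step2 : ∀ a ∈ range (l2 + 1),
      (p ^ ((univ.filter fun j => thr l2 a j = false).card) *
            q ^ ((univ.filter fun j => thr l2 a j = true).card)) *
          (q ^ (S (thr l2 a)).card * (p + q) ^ (l1 - (S (thr l2 a)).card))
      = q ^ (l1 - 1) * (p ^ a * (p + q) ^ (l2 - a) * q) := by
    intro a ha
    simp only [mem_range] at ha
    rw [card_falses l2 a (by omega), card_trues l2 a,
      cardS a (by simp only [mem_range]; omega)]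
    have e1 : l1 - (a + (l1 - l2)) = l2 - a := by omega
    rw [e1]
    have e2 : (l2 - a) + (a + (l1 - l2)) = (l1 - 1) + 1 := by omega
    calc p ^ a * q ^ (l2 - a) * (q ^ (a + (l1 - l2)) * (p + q) ^ (l2 - a))
        = q ^ ((l2 - a) + (a + (l1 - l2))) * (p ^ a * (p + q) ^ (l2 - a)) := by
          rw [pow_add]; ring
      _ = q ^ (l1 - 1) * (p ^ a * (p + q) ^ (l2 - a) * q) := by
          rw [e2, pow_add]; ring
  rw [Finset.sum_congr rfl step2, ← Finset.mul_sum]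
  have geo := geom_sum₂_mul p (p + q) (l2 + 1)
  have hsum : (∑ a ∈ range (l2 + 1), p ^ a * (p + q) ^ (l2 - a) * q)
      = (p + q) ^ (l2 + 1) - p ^ (l2 + 1) := by
    rw [← Finset.sum_mul]
    have : (∑ a ∈ range (l2 + 1), p ^ a * (p + q) ^ (l2 - a))
        = ∑ a ∈ range (l2 + 1), p ^ a * (p + q) ^ (l2 + 1 - 1 - a) := by
      apply Finset.sum_congr rfl
      intro a _
      congr 2
    rw [this]
    linear_combination -geo
  rw [hsum]
  ring
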